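/- Let F : D → R be a function on a finite domain, Z uniform on D, and L(z) ⊆ F^{-1}(F(z)) nonempty sets with z ∈ L(z). Let Z' be a uniform element of F^{-1}(F(Z)). If Pr[Z' ∉ L(Z)] ≥ δ, then E[log₂|F^{-1}(F(Z))|] − E[log₂|L(Z)|] ≥ δ/2. -/

import Mathlib

open Finset
open scoped Classical

lemma aux_logb (α : ℝ) (h0 : 0 ≤ α) (h1 : α ≤ 1) : α / 2 ≤ Real.logb 2 (1 + α) := by
  have hpos : (0:ℝ) < 1 + α := by linarith
  have hlog : α / (1 + α) ≤ Real.log (1 + α) := by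
    have h := Real.log_le_sub_one_of_pos (show (0:ℝ) < (1+α)⁻¹ by positivity)
    rw [Real.log_inv] at h
    have heq : 1 - (1+α)⁻¹ = α / (1+α) := by field_simp; ring
    linarith
  have hl2 : Real.log 2 ≤ 1 := by
    have := Real.log_le_sub_one_of_pos (show (0:ℝ) < 2 by norm_num); linarith
  have hl2p : 0 < Real.log 2 := Real.log_pos (by norm_num)
  have h3 : α / 2 ≤ α / (1 + α) := by
    rw [div_le_div_iff₀ (by norm_num) hpos]; nlinarith
  have h4 : Real.log (1 + α) ≤ Real.logb 2 (1 + α) := by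
    rw [Real.logb, le_div_iff₀ hl2p]
    nlinarith [Real.log_nonneg (by linarith : (1:ℝ) ≤ 1 + α)]
  linarith

lemma aux_pt (a b : ℝ) (ha : 1 ≤ a) (hab : a ≤ b) :
    (b - a) / b / 2 ≤ Real.logb 2 b - Real.logb 2 a := by
  have ha0 : 0 < a := by linarith
  have hb : 0 < b := by linarith
  have h1 : Real.logb 2 b - Real.logb 2 a = Real.logb 2 (b / a) :=
    (Real.logb_div (ne_of_gt hb) (ne_of_gt ha0)).symm
  have hα0 : 0 ≤ (b - a) / b := div_nonneg (by linarith) hb.le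
  have hα1 : (b - a) / b ≤ 1 := by rw [div_le_one hb]; linarith
  have h2 : 1 + (b - a) / b ≤ b / a := by
    have he : 1 + (b - a) / b = (2 * b - a) / b := by field_simp; ring
    rw [he, div_le_div_iff₀ hb ha0]
    nlinarith [sq_nonneg (b - a)]
  have hmono : Real.logb 2 (1 + (b - a) / b) ≤ Real.logb 2 (b / a) :=
    Real.logb_le_logb_of_le (by norm_num) (by linarith) h2
  have := aux_logb _ hα0 hα1
  linarith

/-- If a uniformly random sibling Z' of Z (i.e. uniform in F⁻¹(F(Z))) escapes L(Z) with
probability at least δ, then the expected log-size of L is smaller than the expected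
log-size of the fibers by at least δ/2. -/
theorem stmt18 {D R : Type*} [Fintype D] [Nonempty D] (F : D → R)
    (L : D → Finset D) (hmem : ∀ z, z ∈ L z)
    (hsub : ∀ z, L z ⊆ univ.filter (fun z' => F z' = F z))
    (δ : ℝ)
    (hδ : δ ≤ (1 / (Fintype.card D : ℝ)) * ∑ z,
      (((univ.filter (fun z' => F z' = F z)) \ L z).card : ℝ) /
        ((univ.filter (fun z' => F z' = F z)).card : ℝ)) :
    δ / 2 ≤ (1 / (Fintype.card D : ℝ)) * ∑ z,
      (Real.logb 2 ((univ.filter (fun z' => F z' = F z)).card) -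
        Real.logb 2 ((L z).card)) := by
  set N := (Fintype.card D : ℝ) with hN
  have hN0 : 0 < N := by
    simp [hN]
    exact Fintype.card_pos
  have key : ∀ z : D,
      ((((univ.filter (fun z' => F z' = F z)) \ L z).card : ℝ) /
        ((univ.filter (fun z' => F z' = F z)).card : ℝ)) / 2 ≤
      Real.logb 2 ((univ.filter (fun z' => F z' = F z)).card) -
        Real.logb 2 ((L z).card) := by
    intro z
    have ha : 1 ≤ ((L z).card : ℝ) := by
      exact_mod_cast Finset.card_pos.mpr ⟨z, hmem z⟩
    have hab : ((L z).card : ℝ) ≤ ((univ.filter (fun z' => F z' = F z)).card : ℝ) := by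
      exact_mod_cast Finset.card_le_card (hsub z)
    have hsd : ((((univ.filter (fun z' => F z' = F z)) \ L z).card : ℝ)) =
        ((univ.filter (fun z' => F z' = F z)).card : ℝ) - ((L z).card : ℝ) := by
      rw [Finset.card_sdiff_of_subset (hsub z)]
      push_cast [Nat.cast_sub (Finset.card_le_card (hsub z))]
      ring
    rw [hsd]
    exact aux_pt _ _ ha hab
  have hsum : (∑ z, ((((univ.filter (fun z' => F z' = F z)) \ L z).card : ℝ) /
        ((univ.filter (fun z' => F z' = F z)).card : ℝ)) / 2) ≤
      ∑ z, (Real.logb 2 ((univ.filter (fun z' => F z' = F z)).card) -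
        Real.logb 2 ((L z).card)) :=
    Finset.sum_le_sum (fun z _ => key z)
  rw [← Finset.sum_div] at hsum
  have : δ / 2 ≤ (1 / N) * ((∑ z, ((((univ.filter (fun z' => F z' = F z)) \ L z).card : ℝ) /
        ((univ.filter (fun z' => F z' = F z)).card : ℝ))) / 2) := by
    have he : (1 / N) * ((∑ z, ((((univ.filter (fun z' => F z' = F z)) \ L z).card : ℝ) /
        ((univ.filter (fun z' => F z' = F z)).card : ℝ))) / 2) =
        ((1 / N) * (∑ z, ((((univ.filter (fun z' => F z' = F z)) \ L z).card : ℝ) /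
        ((univ.filter (fun z' => F z' = F z)).card : ℝ)))) / 2 := by ring
    rw [he]
    linarith
  calc δ / 2 ≤ _ := this
    _ ≤ _ := by
        apply mul_le_mul_of_nonneg_left hsum (by positivity)
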